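/- Let C_1, …, C_k be pairwise disjoint nonempty subsets of X whose union is X, let p ∈ (0,1), and let v := M^∞_{[C_1]} · (M^∞_{[C_2]} · ( ⋯ (M^∞_{[C_k]} · P) ⋯ )), the successive matrix–vector products applied to a vector P indexed by configurations with all entries strictly positive. Then for every configuration i: v(i) > 0 if i is constant on each C_r (i.e. for every r, either i(a) = 1 for all a ∈ C_r or i(a) = 0 for all a ∈ C_r), and v(i) = 0 otherwise. (Theorem 1: in the limit of infinite convergence time, the only configurations with positive probability are those in which all taxa of each convergence group have identical states.) -/

import Mathlib

open scoped Classical in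
noncomputable def Minf {X : Type*} [Fintype X] [DecidableEq X]
    (C : Finset X) (p : ℝ) : Matrix (X → Fin 2) (X → Fin 2) ℝ :=
  Matrix.of fun i j =>
    if (∀ a ∈ C, i a = 1) ∧ (∀ a ∉ C, i a = j a) then p
    else if (∀ a ∈ C, i a = 0) ∧ (∀ a ∉ C, i a = j a) then 1 - p
    else 0

open scoped Classical in
private lemma Minf_entry_nonneg {X : Type*} [Fintype X] [DecidableEq X]
    {C : Finset X} {p : ℝ} (hp : p ∈ Set.Ioo (0:ℝ) 1) (i j : X → Fin 2) :
    0 ≤ Minf C p i j := by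
  unfold Minf
  simp only [Matrix.of_apply]
  split_ifs <;> linarith [hp.1, hp.2]

open scoped Classical in
private lemma key {X : Type*} [Fintype X] [DecidableEq X]
    (p : ℝ) (hp : p ∈ Set.Ioo (0:ℝ) 1)
    (P : (X → Fin 2) → ℝ) (hP : ∀ i, 0 < P i) :
    ∀ (L : List (Finset X)), L.Pairwise Disjoint →
      ∀ i : X → Fin 2,
        (0 ≤ (L.map (fun S => Minf S p)).foldr (fun M w => M.mulVec w) P i) ∧
        ((∀ S ∈ L, (∀ a ∈ S, i a = 1) ∨ (∀ a ∈ S, i a = 0)) →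
          0 < (L.map (fun S => Minf S p)).foldr (fun M w => M.mulVec w) P i) ∧
        ((¬ ∀ S ∈ L, (∀ a ∈ S, i a = 1) ∨ (∀ a ∈ S, i a = 0)) →
          (L.map (fun S => Minf S p)).foldr (fun M w => M.mulVec w) P i = 0) := by
  intro L
  induction L with
  | nil =>
    intro _ i
    refine ⟨le_of_lt (hP i), fun _ => hP i, fun h => absurd (by simp) h⟩
  | cons C₀ L ih =>
    intro hpw i
    rw [List.pairwise_cons] at hpw
    have IH := ih hpw.2
    set w := (L.map (fun S => Minf S p)).foldr (fun M w => M.mulVec w) P with hw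
    have hfold : ((C₀ :: L).map (fun S => Minf S p)).foldr (fun M w => M.mulVec w) P i
        = ∑ j, Minf C₀ p i j * w j := by
      simp [Matrix.mulVec, dotProduct]; rfl
    rw [hfold]
    have hterm_nonneg : ∀ j : X → Fin 2, 0 ≤ Minf C₀ p i j * w j := fun j =>
      mul_nonneg (Minf_entry_nonneg hp i j) (IH j).1
    refine ⟨Finset.sum_nonneg (fun j _ => hterm_nonneg j), ?_, ?_⟩
    · intro hall
      apply Finset.sum_pos' (fun j _ => hterm_nonneg j)
      refine ⟨i, Finset.mem_univ i, ?_⟩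
      have hwi : 0 < w i := (IH i).2.1 (fun S hS => hall S (List.mem_cons_of_mem _ hS))
      have hC0 := hall C₀ List.mem_cons_self
      have hentry : 0 < Minf C₀ p i i := by
        unfold Minf
        simp only [Matrix.of_apply]
        split_ifs with hc hc'
        · exact hp.1
        · linarith [hp.2]
        · rcases hC0 with h1 | h0
          · exact absurd ⟨h1, by simp⟩ hc
          · exact absurd ⟨h0, by simp⟩ hc'
      exact mul_pos hentry hwi
    · intro hnall
      apply Finset.sum_eq_zero
      intro j _
      push_neg at hnall
      obtain ⟨S, hS, hS1, hS0⟩ := hnall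
      rcases List.mem_cons.mp hS with rfl | hSL
      · have hentry : Minf S p i j = 0 := by
          unfold Minf
          simp only [Matrix.of_apply]
          rw [if_neg, if_neg]
          · rintro ⟨h, -⟩
            obtain ⟨a, ha, hna⟩ := hS0
            exact hna (h a ha)
          · rintro ⟨h, -⟩
            obtain ⟨a, ha, hna⟩ := hS1
            exact hna (h a ha)
        rw [hentry, zero_mul]
      · by_cases hagree : ∀ a ∉ C₀, i a = j a
        · have hdisjS : Disjoint C₀ S := hpw.1 S hSL
          have hji : ∀ a ∈ S, j a = i a := fun a ha =>
            (hagree a (Finset.disjoint_right.mp hdisjS ha)).symm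
          have : w j = 0 := by
            apply (IH j).2.2
            push_neg
            refine ⟨S, hSL, ?_, ?_⟩
            · obtain ⟨a, ha, hna⟩ := hS1
              exact ⟨a, ha, by rw [hji a ha]; exact hna⟩
            · obtain ⟨a, ha, hna⟩ := hS0
              exact ⟨a, ha, by rw [hji a ha]; exact hna⟩
          rw [this, mul_zero]
        · have hentry : Minf C₀ p i j = 0 := by
            unfold Minf
            simp only [Matrix.of_apply]
            rw [if_neg (fun h => hagree h.2), if_neg (fun h => hagree h.2)]
          rw [hentry, zero_mul]

/-- Theorem 1: in the limit of infinite convergence time, the only configurations with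
positive probability are those in which all taxa of each convergence group have
identical states.  With `C₁, …, C_k` pairwise disjoint nonempty subsets of `X` whose
union is `X` and `v = M^∞_{[C₁]} · (M^∞_{[C₂]} · (⋯ (M^∞_{[C_k]} · P) ⋯))` for a
strictly positive vector `P`, one has `v i > 0` iff `i` is constant on each `C_r`,
and `v i = 0` otherwise. -/
theorem limit_phylogenetic_tensor_support {X : Type*} [Fintype X] [DecidableEq X]
    {k : ℕ} (C : Fin k → Finset X)
    (hdisj : ∀ r s : Fin k, r ≠ s → Disjoint (C r) (C s))
    (hne : ∀ r : Fin k, (C r).Nonempty)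
    (hunion : Finset.univ.biUnion C = (Finset.univ : Finset X))
    (p : ℝ) (hp : p ∈ Set.Ioo (0 : ℝ) 1)
    (P : (X → Fin 2) → ℝ) (hP : ∀ i, 0 < P i)
    (v : (X → Fin 2) → ℝ)
    (hv : v = (List.ofFn fun r : Fin k => Minf (C r) p).foldr
      (fun M w => M.mulVec w) P) :
    ∀ i : X → Fin 2,
      ((∀ r : Fin k, (∀ a ∈ C r, i a = 1) ∨ (∀ a ∈ C r, i a = 0)) → 0 < v i) ∧
      ((¬ ∀ r : Fin k, (∀ a ∈ C r, i a = 1) ∨ (∀ a ∈ C r, i a = 0)) → v i = 0) := by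
  have hofn : (List.ofFn fun r : Fin k => Minf (C r) p)
      = ((List.ofFn C).map (fun S => Minf S p)) := by
    rw [List.map_ofFn]; rfl
  have hpw : (List.ofFn C).Pairwise Disjoint := by
    rw [List.pairwise_ofFn]
    intro r s hrs
    exact hdisj r s (ne_of_lt hrs)
  have hmem : ∀ (Q : Finset X → Prop),
      (∀ S ∈ List.ofFn C, Q S) ↔ ∀ r : Fin k, Q (C r) := by
    intro Q
    constructor
    · intro h r
      exact h (C r) (by simp [List.mem_ofFn])
    · intro h S hS
      obtain ⟨r, rfl⟩ := List.mem_ofFn.mp hS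
      exact h r
  intro i
  have K := key p hp P hP (List.ofFn C) hpw i
  rw [hv, hofn]
  exact ⟨fun h => K.2.1 ((hmem _).mpr h), fun h => K.2.2 (fun h' => h ((hmem _).mp h'))⟩
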